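/- Let 𝕋 = ℝ/ℤ be the circle group. The map from ℕ (including 0) to C(𝕋, ℂ) given by k ↦ (x ↦ cos(2πkx)) is injective, its range is exactly the cosine class COS(𝕋), and this range is a discrete subspace of C(𝕋, ℂ) in the compact-open topology. Consequently, COS(𝕋) with the topology of uniform convergence on compacta is homeomorphic to ℕ with the discrete topology. -/

import Mathlib

open Topology Real

/-- The cosine class `COS(G)`: nonzero bounded continuous `φ : G → ℂ` satisfying the
d'Alembert equation `φ(x) φ(y) = (φ(x+y) + φ(x-y))/2`. -/
def CosClass (G : Type*) [AddCommGroup G] [TopologicalSpace G] : Set (G → ℂ) :=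
  {φ | Continuous φ ∧ (∃ C, ∀ x, ‖φ x‖ ≤ C) ∧ φ ≠ 0 ∧
    ∀ x y, φ x * φ y = (φ (x + y) + φ (x - y)) / 2}

/-- The function on `𝕋 = ℝ/ℤ` induced by `x ↦ cos(2πkx)`, as an element of `C(𝕋, ℂ)`. -/
noncomputable def cosCharT (k : ℕ) : C(AddCircle (1 : ℝ), ℂ) :=
  ⟨fun x => (((AddCircle.toCircle ((k : ℤ) • x)) : ℂ) +
      (starRingEnd ℂ) ((AddCircle.toCircle ((k : ℤ) • x)) : ℂ)) / 2, by
    have h1 : Continuous fun x : AddCircle (1 : ℝ) =>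
        (AddCircle.toCircle ((k : ℤ) • x) : ℂ) :=
      continuous_subtype_val.comp (AddCircle.continuous_toCircle.comp (continuous_zsmul _))
    exact (h1.add (Complex.continuous_conj.comp h1)).div_const 2⟩

namespace CosClassAux

open AddCircle MeasureTheory Complex

instance : Fact ((0:ℝ) < 1) := ⟨one_pos⟩

lemma cosCharT_apply (k : ℕ) (x : AddCircle (1:ℝ)) :
    cosCharT k x = (fourier (k:ℤ) x + fourier (-(k:ℤ)) x) / 2 := by
  rw [fourier_neg, fourier_apply]; rfl

lemma cosVal (k : ℕ) (x : ℝ) :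
    cosCharT k ((x : ℝ) : AddCircle (1 : ℝ)) = (Real.cos (2 * π * k * x) : ℂ) := by
  rw [cosCharT_apply, fourier_coe_apply, fourier_coe_apply, Complex.ofReal_cos, Complex.cos]
  push_cast; ring_nf

lemma cosInj : Function.Injective cosCharT := by
  intro k j h
  by_contra hne
  wlog hkj : k < j generalizing k j
  · exact this h.symm (Ne.symm hne) (by omega)
  have hj : 0 < j := Nat.pos_of_ne_zero (by omega)
  have := congrArg (fun f : C(AddCircle (1:ℝ), ℂ) => f (((1/(2*j) : ℝ)) : AddCircle (1:ℝ))) h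
  simp only [cosVal] at this
  rw [Complex.ofReal_inj] at this
  have hjr : (0:ℝ) < j := by exact_mod_cast hj
  have e1 : 2 * π * j * (1/(2*j)) = π := by field_simp
  have e2 : 2 * π * k * (1/(2*j)) = π * k / j := by field_simp
  rw [e1, e2] at this
  have hlt : π * k / j < π := by
    rw [div_lt_iff₀ hjr]
    have : (k:ℝ) < j := by exact_mod_cast hkj
    nlinarith [Real.pi_pos]
  have hge : 0 ≤ π * k / j := by positivity
  have h2 := Real.strictAntiOn_cos ⟨hge, hlt.le⟩ ⟨le_refl 0 |>.trans Real.pi_pos.le, le_refl π⟩ hlt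
  rw [this] at h2
  exact lt_irrefl _ h2

lemma integral_fourier_delta (n : ℤ) :
    (∫ x : AddCircle (1:ℝ), fourier n x ∂haarAddCircle) = if n = 0 then 1 else 0 := by
  split_ifs with h
  · subst h; simp only [fourier_zero]; simp
  · exact integral_eq_zero_of_add_right_eq_neg (μ := haarAddCircle)
      (fourier_add_half_inv_index h one_pos)

lemma integrable_of_cont {f : AddCircle (1:ℝ) → ℂ} (hf : Continuous f) :
    Integrable f haarAddCircle :=
  hf.integrable_of_hasCompactSupport (HasCompactSupport.of_compactSpace f)

lemma fourier_arg_add (n : ℤ) (x y : AddCircle (1:ℝ)) :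
    fourier n (x + y) = fourier n x * fourier n y := by
  simp only [fourier_apply, smul_add, AddCircle.toCircle_add]
  push_cast; ring

lemma fourier_arg_neg (n : ℤ) (x : AddCircle (1:ℝ)) :
    fourier n (-x) = fourier (-n) x := by
  simp only [fourier_apply, smul_neg, neg_smul]

lemma norm_fourier_apply (n : ℤ) (x : AddCircle (1:ℝ)) : ‖fourier n x‖ = 1 := by
  simp [fourier_apply, Circle.norm_coe]

lemma fourierCoeff_cosCharT (k : ℕ) (n : ℤ) :
    fourierCoeff (⇑(cosCharT k)) n =
      ((if (k:ℤ) = n then 1 else 0) + (if -(k:ℤ) = n then 1 else 0)) / 2 := by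
  have : ∀ x : AddCircle (1:ℝ), fourier (-n) x • (cosCharT k) x
      = (fourier (-n + k) x + fourier (-n + -k) x) / 2 := by
    intro x
    rw [smul_eq_mul, cosCharT_apply, fourier_add, fourier_add]
    ring
  rw [fourierCoeff]
  simp_rw [this]
  rw [integral_div, integral_add (integrable_of_cont (map_continuous _))
    (integrable_of_cont (map_continuous _)), integral_fourier_delta, integral_fourier_delta]
  congr 2 <;> simp [eq_comm, neg_add_eq_zero]

lemma coeff_dist_le (f g : C(AddCircle (1:ℝ), ℂ)) (n : ℤ) :
    ‖fourierCoeff (⇑f) n - fourierCoeff (⇑g) n‖ ≤ dist f g := by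
  have h1 : fourierCoeff (⇑f) n - fourierCoeff (⇑g) n
      = ∫ x : AddCircle (1:ℝ), fourier (-n) x * (f x - g x) ∂haarAddCircle := by
    rw [fourierCoeff, fourierCoeff, ← integral_sub
      (integrable_of_cont (f := fun t => fourier (-n) t • f t) (((fourier (-n)).continuous).smul f.continuous))
      (integrable_of_cont (f := fun t => fourier (-n) t • g t) (((fourier (-n)).continuous).smul g.continuous))]
    congr 1; ext x; simp only [smul_eq_mul]; ring
  rw [h1]
  have h2 := norm_integral_le_of_norm_le_const (μ := haarAddCircle)
    (C := dist f g) (f := fun x : AddCircle (1:ℝ) => fourier (-n) x * (f x - g x)) ?_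
  · simpa using h2
  · filter_upwards with x
    rw [norm_mul, norm_fourier_apply, one_mul]
    calc ‖f x - g x‖ = dist (f x) (g x) := (dist_eq_norm _ _).symm
      _ ≤ dist f g := ContinuousMap.dist_apply_le_dist x

lemma eq_zero_of_coeff_zero (f : C(AddCircle (1:ℝ), ℂ)) (h : ∀ n, fourierCoeff (⇑f) n = 0) :
    f = 0 := by
  have h2 : ∀ n, fourierBasis.repr (ContinuousMap.toLp (E := ℂ) 2 haarAddCircle ℂ f) n = 0 := by
    intro n; rw [fourierBasis_repr, fourierCoeff_toLp]; exact h n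
  have h3 : ContinuousMap.toLp (E := ℂ) 2 haarAddCircle ℂ f = 0 := by
    apply fourierBasis.repr.injective
    ext n; simp [h2 n]
  have h4 : (⇑f : AddCircle (1:ℝ) → ℂ) =ᵐ[haarAddCircle] 0 := by
    have := ContinuousMap.coeFn_toLp (p := 2) (μ := haarAddCircle) (𝕜 := ℂ) f
    rw [h3] at this
    exact (this.symm).trans (Lp.coeFn_zero _ _ _)
  ext x
  have := (f.continuous.ae_eq_iff_eq haarAddCircle continuous_const).mp h4
  rw [ContinuousMap.zero_apply, this]
  rfl

variable (φ : C(AddCircle (1:ℝ), ℂ))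

lemma phi_zero (hc : ⇑φ ∈ CosClass (AddCircle (1:ℝ))) : φ 0 = 1 := by
  obtain ⟨hcont, hbd, hne, hd⟩ := hc
  have h00 := hd 0 0
  simp only [add_zero, sub_zero, zero_add, zero_sub] at h00
  have hcase : φ 0 = 0 ∨ φ 0 = 1 := by
    have h0 : φ 0 * (φ 0 - 1) = 0 := by linear_combination h00
    rcases mul_eq_zero.mp h0 with h | h
    exacts [Or.inl h, Or.inr (by linear_combination h)]
  rcases hcase with h | h
  · exfalso; apply hne; funext x
    have hx := hd x 0
    simp only [add_zero, sub_zero] at hx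
    rw [h] at hx
    show φ x = 0
    linear_combination -hx
  · exact h

lemma phi_even (hc : ⇑φ ∈ CosClass (AddCircle (1:ℝ))) : ∀ y, φ (-y) = φ y := by
  obtain ⟨hcont, hbd, hne, hd⟩ := hc
  intro y
  have h := hd 0 y
  rw [zero_add, zero_sub, phi_zero φ ⟨hcont, hbd, hne, hd⟩, one_mul] at h
  linear_combination -2 * h

lemma coeff_even (hc : ⇑φ ∈ CosClass (AddCircle (1:ℝ))) (n : ℤ) :
    fourierCoeff (⇑φ) (-n) = fourierCoeff (⇑φ) n := by
  rw [fourierCoeff, fourierCoeff]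
  conv_rhs => rw [← integral_neg_eq_self (fun t => fourier (-n) t • φ t) haarAddCircle]
  congr 1
  funext y
  simp only [smul_eq_mul, neg_neg, fourier_arg_neg, phi_even φ hc]

lemma key_transl (n : ℤ) (x : AddCircle (1:ℝ)) :
    ∫ y, fourier (-n) y * φ (x + y) ∂haarAddCircle = fourier n x * fourierCoeff (⇑φ) n := by
  have h := integral_add_left_eq_self (μ := haarAddCircle)
    (fun y => fourier (-n) (y + (-x)) * φ y) x
  have e : ∀ y : AddCircle (1:ℝ), fourier (-n) (x + y + -x) * φ (x + y)
      = fourier (-n) y * φ (x + y) := by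
    intro y; congr 2; abel
  simp_rw [e] at h
  rw [h]
  have e2 : ∀ y : AddCircle (1:ℝ), fourier (-n) (y + -x) * φ y
      = fourier n x * (fourier (-n) y * φ y) := by
    intro y
    rw [fourier_arg_add, fourier_arg_neg, neg_neg]
    ring
  simp_rw [e2]
  rw [MeasureTheory.integral_const_mul]
  rw [fourierCoeff]
  simp_rw [smul_eq_mul]

lemma key (hc : ⇑φ ∈ CosClass (AddCircle (1:ℝ))) (n : ℤ) (x : AddCircle (1:ℝ)) :
    fourierCoeff (⇑φ) n * φ x
      = fourierCoeff (⇑φ) n * ((fourier n x + fourier (-n) x) / 2) := by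
  obtain ⟨hcont, hbd, hne, hd⟩ := hc
  have hint : ∀ (g : AddCircle (1:ℝ) → ℂ), Continuous g → Integrable g haarAddCircle :=
    fun g hg => integrable_of_cont hg
  have hB : ∫ y, fourier (-n) y * φ (x - y) ∂haarAddCircle
      = fourier (-n) x * fourierCoeff (⇑φ) n := by
    have h := integral_neg_eq_self (fun y => fourier (-n) (-y) * φ (x - (-y))) haarAddCircle
    simp only [neg_neg] at h
    have e : ∀ y : AddCircle (1:ℝ), fourier (-n) (-y) * φ (x - -y)
        = fourier n y * φ (x + y) := by
      intro y; rw [fourier_arg_neg, neg_neg, sub_neg_eq_add]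
    simp_rw [e] at h
    rw [h]
    have h2 := key_transl φ (-n) x
    rw [neg_neg] at h2
    rw [h2, coeff_even φ ⟨hcont, hbd, hne, hd⟩]
  calc fourierCoeff (⇑φ) n * φ x
      = ∫ y, fourier (-n) y * (φ x * φ y) ∂haarAddCircle := by
        rw [fourierCoeff, ← MeasureTheory.integral_mul_const]
        congr 1; funext y; simp only [smul_eq_mul]; ring
    _ = ∫ y, (fourier (-n) y * φ (x + y) + fourier (-n) y * φ (x - y)) / 2 ∂haarAddCircle := by
        congr 1; funext y; rw [hd x y]; ring
    _ = ((∫ y, fourier (-n) y * φ (x + y) ∂haarAddCircle)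
          + ∫ y, fourier (-n) y * φ (x - y) ∂haarAddCircle) / 2 := by
        rw [← integral_add, ← integral_div]
        · exact hint _ (((fourier (-n)).continuous).mul (hcont.comp (by continuity)))
        · exact hint _ (((fourier (-n)).continuous).mul (hcont.comp (by continuity)))
    _ = (fourier n x * fourierCoeff (⇑φ) n + fourier (-n) x * fourierCoeff (⇑φ) n) / 2 := by
        rw [key_transl φ n x, hB]
    _ = fourierCoeff (⇑φ) n * ((fourier n x + fourier (-n) x) / 2) := by ring

lemma mem_range_of_cos (hc : ⇑φ ∈ CosClass (AddCircle (1:ℝ))) :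
    ∃ k : ℕ, cosCharT k = φ := by
  have hnz : ∃ n : ℤ, fourierCoeff (⇑φ) n ≠ 0 := by
    by_contra h
    push_neg at h
    have := eq_zero_of_coeff_zero φ h
    subst this
    exact hc.2.2.1 rfl
  obtain ⟨n, hn⟩ := hnz
  refine ⟨n.natAbs, ?_⟩
  ext x
  have hk := key φ hc n x
  have hx : φ x = (fourier n x + fourier (-n) x) / 2 :=
    mul_left_cancel₀ hn hk
  rw [cosCharT_apply, hx]
  rcases Int.natAbs_eq n with h | h
  · rw [← h]
  · rw [← neg_neg (n.natAbs : ℤ), ← h]; ring_nf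

lemma range_eq :
    Set.range cosCharT = {f : C(AddCircle (1 : ℝ), ℂ) | ⇑f ∈ CosClass (AddCircle (1 : ℝ))} := by
  ext f
  constructor
  · rintro ⟨k, rfl⟩
    refine ⟨(cosCharT k).continuous, ⟨1, fun x => ?_⟩, ?_, fun x y => ?_⟩
    · rw [cosCharT_apply, norm_div]
      have hb := norm_add_le (fourier (k:ℤ) x) (fourier (-(k:ℤ)) x)
      rw [norm_fourier_apply, norm_fourier_apply] at hb
      have h2 : ‖(2:ℂ)‖ = 2 := by norm_num
      rw [h2]
      linarith
    · intro h
      have := congrFun h 0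
      rw [cosCharT_apply] at this
      simp [fourier_eval_zero] at this
    · simp only [cosCharT_apply]
      rw [fourier_arg_add, fourier_arg_add]
      have hsub : ∀ m : ℤ, fourier m (x - y) = fourier m x * fourier (-m) y := by
        intro m
        rw [sub_eq_add_neg, fourier_arg_add, fourier_arg_neg]
      rw [hsub, hsub, neg_neg]
      ring
  · intro hf
    exact mem_range_of_cos f hf

lemma sep : ∀ k j : ℕ, k ≠ j → (1:ℝ)/2 ≤ dist (cosCharT k) (cosCharT j) := by
  intro k j hne
  have h := coeff_dist_le (cosCharT j) (cosCharT k) (j : ℤ)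
  rw [fourierCoeff_cosCharT, fourierCoeff_cosCharT] at h
  have e1 : (((if (j:ℤ) = (j:ℤ) then 1 else 0) + (if -(j:ℤ) = (j:ℤ) then 1 else 0)) / 2
      - ((if (k:ℤ) = (j:ℤ) then 1 else 0) + (if -(k:ℤ) = (j:ℤ) then 1 else 0)) / 2 : ℂ)
      = (1 + (if -(j:ℤ) = (j:ℤ) then 1 else 0)) / 2 := by
    have hk1 : ¬ ((k:ℤ) = (j:ℤ)) := by exact_mod_cast hne
    have hk2 : ¬ (-(k:ℤ) = (j:ℤ)) := by
      intro hcontra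
      have : (k:ℤ) = 0 ∧ (j:ℤ) = 0 := by omega
      exact hne (by omega)
    rw [if_pos rfl, if_neg hk1, if_neg hk2]
    ring
  rw [e1] at h
  rw [dist_comm]
  refine le_trans ?_ h
  split_ifs with hj
  · norm_num
  · norm_num

theorem discrete : DiscreteTopology (Set.range cosCharT) := by
  rw [discreteTopology_iff_isOpen_singleton]
  rintro ⟨p, hp⟩
  have : ({⟨p, hp⟩} : Set (Set.range cosCharT)) = (Subtype.val) ⁻¹' (Metric.ball p (1/4)) := by
    ext ⟨q, hq⟩
    simp only [Set.mem_singleton_iff, Set.mem_preimage, Metric.mem_ball, Subtype.mk.injEq]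
    constructor
    · rintro rfl
      simp
    · intro hlt
      by_contra hne
      obtain ⟨k, rfl⟩ := hq
      obtain ⟨j, rfl⟩ := hp
      have hkj : k ≠ j := fun h => hne (by rw [h])
      linarith [sep k j hkj, hlt]
  rw [this]
  exact (Metric.isOpen_ball).preimage continuous_subtype_val

end CosClassAux

/-- On `𝕋 = ℝ/ℤ`, the map `k ↦ (x ↦ cos(2πkx))` from `ℕ` to `C(𝕋, ℂ)`
is injective, its range is exactly `COS(𝕋)`, and the range is a discrete subspace in the
compact-open topology; consequently `COS(𝕋)` with the topology of uniform convergence on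
compacta is homeomorphic to the discrete space `ℕ`. -/
theorem cosClass_circle_homeomorph :
    (∀ (k : ℕ) (x : ℝ),
      cosCharT k ((x : ℝ) : AddCircle (1 : ℝ)) = (Real.cos (2 * π * k * x) : ℂ)) ∧
    Function.Injective cosCharT ∧
    Set.range cosCharT = {φ : C(AddCircle (1 : ℝ), ℂ) | ⇑φ ∈ CosClass (AddCircle (1 : ℝ))} ∧
    DiscreteTopology (Set.range cosCharT) ∧
    Nonempty ({φ : C(AddCircle (1 : ℝ), ℂ) // ⇑φ ∈ CosClass (AddCircle (1 : ℝ))} ≃ₜ ℕ) := by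
  have hrange := CosClassAux.range_eq
  have hdisc := CosClassAux.discrete
  refine ⟨CosClassAux.cosVal, CosClassAux.cosInj, hrange, hdisc, ?_⟩
  have hdisc2 : DiscreteTopology
      {φ : C(AddCircle (1 : ℝ), ℂ) // ⇑φ ∈ CosClass (AddCircle (1 : ℝ))} := by
    have : DiscreteTopology (↥{f : C(AddCircle (1 : ℝ), ℂ) | ⇑f ∈ CosClass (AddCircle (1 : ℝ))}) := by
      rw [← hrange]; exact hdisc
    exact this
  let e : ℕ ≃ {φ : C(AddCircle (1 : ℝ), ℂ) // ⇑φ ∈ CosClass (AddCircle (1 : ℝ))} :=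
    (Equiv.ofInjective cosCharT CosClassAux.cosInj).trans (Equiv.setCongr hrange)
  exact ⟨{ toEquiv := e.symm
           continuous_toFun := continuous_of_discreteTopology
           continuous_invFun := continuous_of_discreteTopology }⟩
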